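/- Let H be a Hopf algebra over a field k, R a commutative k-algebra, and J the two-sided ideal of H generated by the subspace I₁(H). An algebra morphism ψ : H → R vanishes on J (equivalently, factors through the quotient H^⟨1⟩ = H/J) if and only if ψ commutes under convolution with every scalar linear form: for every linear form φ ∈ H* = Hom(H,k) and every x ∈ H, one has φ(x₂)·ψ(x₁) = φ(x₁)·ψ(x₂) in R, i.e. ψ * (η_R ∘ φ) = (η_R ∘ φ) * ψ in Hom(H,R). -/
import Mathlib


open TensorProduct

/-- `I₁(H)`: the subspace of `H` spanned by the elements
`φ(x₁)·x₂ − φ(x₂)·x₁` for `x ∈ H` and linear forms `φ : H → k`. -/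
noncomputable def lazySubspace (k : Type*) [Field k] (H : Type*)
    [Ring H] [HopfAlgebra k H] : Submodule k H :=
  Submodule.span k {y : H | ∃ (x : H) (φ : H →ₗ[k] k),
    y = (TensorProduct.lid k H)
          (TensorProduct.map φ LinearMap.id (Coalgebra.comul x))
      - (TensorProduct.rid k H)
          (TensorProduct.map LinearMap.id φ (Coalgebra.comul x))}

/-- The two-sided ideal of `H` generated by `I₁(H)`, as a `k`-subspace:
the span of the elements `a * y * b` with `y ∈ I₁(H)` and `a, b ∈ H`. -/
noncomputable def lazyIdeal (k : Type*) [Field k] (H : Type*)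
    [Ring H] [HopfAlgebra k H] : Submodule k H :=
  Submodule.span k {z : H | ∃ (a b y : H), y ∈ lazySubspace k H ∧ z = a * y * b}

/-- The convolution product `f * g = μ_R ∘ (f ⊗ g) ∘ Δ`. -/
noncomputable def conv (k : Type*) [Field k] {D R : Type*}
    [AddCommGroup D] [Module k D] [CoalgebraStruct k D]
    [CommRing R] [Algebra k R] (f g : D →ₗ[k] R) : D →ₗ[k] R :=
  LinearMap.mul' k R ∘ₗ TensorProduct.map f g ∘ₗ Coalgebra.comul


lemma aux_left (k : Type*) [Field k] {H R : Type*} [Ring H] [HopfAlgebra k H]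
    [CommRing R] [Algebra k R] (ψ : H →ₐ[k] R) (φ : H →ₗ[k] k) (t : H ⊗[k] H) :
    LinearMap.mul' k R
      (TensorProduct.map (Algebra.linearMap k R ∘ₗ φ) ψ.toLinearMap t)
      = ψ ((TensorProduct.lid k H) (TensorProduct.map φ LinearMap.id t)) := by
  induction t using TensorProduct.induction_on with
  | zero => simp
  | tmul a b => simp [Algebra.smul_def]
  | add x y hx hy => simp [hx, hy]

lemma aux_right (k : Type*) [Field k] {H R : Type*} [Ring H] [HopfAlgebra k H]
    [CommRing R] [Algebra k R] (ψ : H →ₐ[k] R) (φ : H →ₗ[k] k) (t : H ⊗[k] H) :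
    LinearMap.mul' k R
      (TensorProduct.map ψ.toLinearMap (Algebra.linearMap k R ∘ₗ φ) t)
      = ψ ((TensorProduct.rid k H) (TensorProduct.map LinearMap.id φ t)) := by
  induction t using TensorProduct.induction_on with
  | zero => simp
  | tmul a b => simp [Algebra.smul_def, mul_comm]
  | add x y hx hy => simp [hx, hy]

/-- an algebra morphism `ψ : H → R` vanishes on the two-sided
ideal `J` generated by `I₁(H)` (equivalently, factors through `H^⟨1⟩ = H/J`)
if and only if `ψ` commutes under convolution with every scalar linear form,
i.e. `ψ * (η_R ∘ φ) = (η_R ∘ φ) * ψ` in `Hom(H,R)` for every `φ : H → k`. -/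
theorem algHom_vanishes_on_lazyIdeal_iff_central
    (k : Type*) [Field k] (H : Type*) [Ring H] [HopfAlgebra k H]
    (R : Type*) [CommRing R] [Algebra k R] (ψ : H →ₐ[k] R) :
    (∀ z ∈ lazyIdeal k H, ψ z = 0) ↔
    (∀ φ : H →ₗ[k] k,
      conv k ψ.toLinearMap (Algebra.linearMap k R ∘ₗ φ)
        = conv k (Algebra.linearMap k R ∘ₗ φ) ψ.toLinearMap) := by
  constructor
  · intro hvan φ
    ext x
    have hy : ((TensorProduct.lid k H)
          (TensorProduct.map φ LinearMap.id (Coalgebra.comul x))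
      - (TensorProduct.rid k H)
          (TensorProduct.map LinearMap.id φ (Coalgebra.comul x))) ∈ lazyIdeal k H := by
      apply Submodule.subset_span
      refine ⟨1, 1, _, Submodule.subset_span ⟨x, φ, rfl⟩, by rw [one_mul, mul_one]⟩
    have := hvan _ hy
    rw [map_sub, sub_eq_zero] at this
    simp only [conv, LinearMap.coe_comp, Function.comp_apply]
    rw [aux_left, aux_right, this]
  · intro hc z hz
    induction hz using Submodule.span_induction with
    | mem z hzmem =>
      obtain ⟨a, b, y, hy, rfl⟩ := hzmem
      have hψy : ψ y = 0 := by
        induction hy using Submodule.span_induction with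
        | mem y hymem =>
          obtain ⟨x, φ, rfl⟩ := hymem
          have := congrFun (congrArg DFunLike.coe (hc φ)) x
          simp only [conv, LinearMap.coe_comp, Function.comp_apply] at this
          rw [aux_left, aux_right] at this
          rw [map_sub, this, sub_self]
        | zero => simp
        | add u v _ _ hu hv => rw [map_add, hu, hv, add_zero]
        | smul c u _ hu => rw [map_smul, hu, smul_zero]
      rw [map_mul, map_mul, hψy, mul_zero, zero_mul]
    | zero => simp
    | add u v _ _ hu hv => rw [map_add, hu, hv, add_zero]
    | smul c u _ hu => rw [map_smul, hu, smul_zero]
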